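/- For all y ∈ ℝ^q and w ∈ ℝ^q, ‖(∇_x f(x,y*) − J(x,y*) v*) − (∇_x f(x,y) − J(x,y) w)‖ ≤ (L + Mτ/μ)‖y − y*‖ + L‖w − v*‖. -/
import Mathlib


open scoped RealInnerProductSpace

/-- **Lemma 4 (pointwise hypergradient approximation error).**
With `x` fixed, `gradxf y = ∇_x f(x,y)`, `gradyf y = ∇_y f(x,y)`,
`J y = ∇_x∇_y g(x,y)`, `Hess y = ∇²_y g(x,y)`, `Hinv = [∇²_y g(x,y*)]⁻¹` and
`v* = [∇²_y g(x,y*)]⁻¹ ∇_y f(x,y*)`: for all `y, w`,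
`‖(∇_x f(x,y*) − J(x,y*) v*) − (∇_x f(x,y) − J(x,y) w)‖
  ≤ (L + Mτ/μ)‖y − y*‖ + L‖w − v*‖`. -/
theorem stmt_3 {p q : ℕ}
    (μ L M τ : ℝ) (hμ : 0 < μ) (hL : 0 < L) (hM : 0 < M) (hτ : 0 < τ)
    (ystar : EuclideanSpace ℝ (Fin q))
    (gradxf : EuclideanSpace ℝ (Fin q) → EuclideanSpace ℝ (Fin p))
    (gradyf : EuclideanSpace ℝ (Fin q) → EuclideanSpace ℝ (Fin q))
    (J : EuclideanSpace ℝ (Fin q) → (EuclideanSpace ℝ (Fin q) →L[ℝ] EuclideanSpace ℝ (Fin p)))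
    (Hess : EuclideanSpace ℝ (Fin q) →
      (EuclideanSpace ℝ (Fin q) →L[ℝ] EuclideanSpace ℝ (Fin q)))
    (Hinv : EuclideanSpace ℝ (Fin q) →L[ℝ] EuclideanSpace ℝ (Fin q))
    (hPos : ∀ y w, μ * ‖w‖ ^ 2 ≤ ⟪Hess y w, w⟫)
    (hInv₁ : (Hess ystar).comp Hinv = 1)
    (hInv₂ : Hinv.comp (Hess ystar) = 1)
    (hInvNorm : ‖Hinv‖ ≤ 1 / μ)
    (hgradyfBound : ∀ y, ‖gradyf y‖ ≤ M)
    (hgradxfLip : ∀ y₁ y₂, ‖gradxf y₁ - gradxf y₂‖ ≤ L * ‖y₁ - y₂‖)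
    (hJBound : ∀ y, ‖J y‖ ≤ L)
    (hJLip : ∀ y₁ y₂, ‖J y₁ - J y₂‖ ≤ τ * ‖y₁ - y₂‖)
    (vstar : EuclideanSpace ℝ (Fin q)) (hvstar : vstar = Hinv (gradyf ystar))
    (hvstarBound : ‖vstar‖ ≤ M / μ) :
    ∀ (y w : EuclideanSpace ℝ (Fin q)),
      ‖(gradxf ystar - J ystar vstar) - (gradxf y - J y w)‖ ≤
        (L + M * τ / μ) * ‖y - ystar‖ + L * ‖w - vstar‖ := by
  intro y w
  have key : (gradxf ystar - J ystar vstar) - (gradxf y - J y w)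
      = (gradxf ystar - gradxf y) + ((J ystar - J y) (-vstar) + J y (w - vstar)) := by
    simp only [ContinuousLinearMap.sub_apply, map_sub, map_neg]
    abel
  rw [key]
  have h1 : ‖gradxf ystar - gradxf y‖ ≤ L * ‖y - ystar‖ := by
    rw [show ‖y - ystar‖ = ‖ystar - y‖ from (norm_sub_rev _ _)]
    exact hgradxfLip ystar y
  have h2 : ‖(J ystar - J y) (-vstar)‖ ≤ (M * τ / μ) * ‖y - ystar‖ := by
    calc ‖(J ystar - J y) (-vstar)‖ ≤ ‖J ystar - J y‖ * ‖(-vstar : EuclideanSpace ℝ (Fin q))‖ :=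
          (J ystar - J y).le_opNorm _
      _ ≤ (τ * ‖ystar - y‖) * (M / μ) := by
          rw [norm_neg]
          exact mul_le_mul (hJLip ystar y) hvstarBound (norm_nonneg _)
            (mul_nonneg hτ.le (norm_nonneg _))
      _ = (M * τ / μ) * ‖y - ystar‖ := by rw [norm_sub_rev]; ring
  have h3 : ‖J y (w - vstar)‖ ≤ L * ‖w - vstar‖ := by
    calc ‖J y (w - vstar)‖ ≤ ‖J y‖ * ‖w - vstar‖ := (J y).le_opNorm _
      _ ≤ L * ‖w - vstar‖ := mul_le_mul_of_nonneg_right (hJBound y) (norm_nonneg _)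
  calc ‖(gradxf ystar - gradxf y) + ((J ystar - J y) (-vstar) + J y (w - vstar))‖
      ≤ ‖gradxf ystar - gradxf y‖ + (‖(J ystar - J y) (-vstar)‖ + ‖J y (w - vstar)‖) :=
        (norm_add_le _ _).trans (by gcongr; exact norm_add_le _ _)
    _ ≤ L * ‖y - ystar‖ + ((M * τ / μ) * ‖y - ystar‖ + L * ‖w - vstar‖) := by
        gcongr
    _ = (L + M * τ / μ) * ‖y - ystar‖ + L * ‖w - vstar‖ := by ring
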